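/- K-stage expected pseudo-outcome identity (the induction result in the proof of Theorem 1): Let K ≥ 1 and let 𝓖₁ ⊆ 𝓖₂ ⊆ … ⊆ 𝓖_K ⊆ 𝓕 be sub-σ-algebras (the observed information σ(H_j*, A_j*) at stages j = 1, …, K). For each j let A_j be a treatment indicator (the true stage-j treatment), ν_j an integrable random variable (the treatment-free term ν_j(H_j)), C_j a bounded 𝓖_j-measurable random variable (the contrast value C_j(H_j), assumed to depend only on observed information), and π_j a bounded 𝓖_j-measurable version of E[A_j | 𝓖_j]. Let Y be integrable and define V_{K+1} = Y and V_j = ν_j + 𝟙{C_j > 0}·C_j for j = 1, …, K. Assume that for each j = 1, …, K there is a σ-algebra 𝓜_j with 𝓖_j ⊆ 𝓜_j ⊆ 𝓕 and E[V_{j+1} | 𝓜_j] = ν_j + A_j·C_j μ-a.e. (Condition 1 together with the stage-j Q-function recursion). Define the pseudo outcomes Ṽ_{K+1} = Y and Ṽ_j = Ṽ_{j+1} + (𝟙{C_j > 0} − π_j)·C_j for j = K, …, 1. Then for every j = 1, …, K, E[Ṽ_{j+1} | 𝓖_j] = E[ν_j | 𝓖_j] + π_j·C_j μ-a.e. -/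

import Mathlib

open MeasureTheory

/-- K-stage expected pseudo-outcome identity (the backward-induction result in
the proof of Theorem 1): for each stage `j = 1, …, K`,
`E[Ṽ_{j+1} | 𝓖_j] = E[ν_j | 𝓖_j] + π_j·C_j`. -/
theorem K_stage_expected_pseudo_outcome
    {Ω : Type*} {mΩ : MeasurableSpace Ω} (μ : Measure Ω) [IsProbabilityMeasure μ]
    (K : ℕ) (hK : 1 ≤ K)
    (𝓖 : ℕ → MeasurableSpace Ω)
    (h𝓖mono : ∀ j, 1 ≤ j → j < K → 𝓖 j ≤ 𝓖 (j + 1)) (h𝓖le : ∀ j, 1 ≤ j → j ≤ K → 𝓖 j ≤ mΩ)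
    (A : ℕ → Ω → ℝ) (hA : ∀ j, 1 ≤ j → j ≤ K → Measurable (A j))
    (hA01 : ∀ j, 1 ≤ j → j ≤ K → ∀ ω, A j ω = 0 ∨ A j ω = 1)
    (ν : ℕ → Ω → ℝ) (hν : ∀ j, 1 ≤ j → j ≤ K → Integrable (ν j) μ)
    (C : ℕ → Ω → ℝ) (hC : ∀ j, 1 ≤ j → j ≤ K → Measurable[𝓖 j] (C j))
    (hCbdd : ∀ j, 1 ≤ j → j ≤ K → ∃ M, ∀ ω, |C j ω| ≤ M)
    (π : ℕ → Ω → ℝ) (hπ : ∀ j, 1 ≤ j → j ≤ K → Measurable[𝓖 j] (π j))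
    (hπbdd : ∀ j, 1 ≤ j → j ≤ K → ∃ M, ∀ ω, |π j ω| ≤ M)
    (hπver : ∀ j, 1 ≤ j → j ≤ K → π j =ᵐ[μ] μ[A j | 𝓖 j])
    (Y : Ω → ℝ) (hY : Integrable Y μ)
    -- the value functions V_{K+1} = Y and V_j = ν_j + 𝟙{C_j > 0}·C_j
    (V : ℕ → Ω → ℝ) (hVtop : V (K + 1) = Y)
    (hV : ∀ j, 1 ≤ j → j ≤ K →
      V j = fun ω => ν j ω + (if 0 < C j ω then (1 : ℝ) else 0) * C j ω)
    -- Condition 1 together with the stage-j Q-function recursion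
    (h𝓜 : ∀ j, 1 ≤ j → j ≤ K → ∃ 𝓜 : MeasurableSpace Ω, 𝓖 j ≤ 𝓜 ∧ 𝓜 ≤ mΩ ∧
      μ[V (j + 1) | 𝓜] =ᵐ[μ] fun ω => ν j ω + A j ω * C j ω)
    -- the modified pseudo outcomes Ṽ_{K+1} = Y, Ṽ_j = Ṽ_{j+1} + (𝟙{C_j > 0} − π_j)·C_j
    (Vt : ℕ → Ω → ℝ) (hVttop : Vt (K + 1) = Y)
    (hVt : ∀ j, 1 ≤ j → j ≤ K →
      Vt j = fun ω => Vt (j + 1) ω + ((if 0 < C j ω then (1 : ℝ) else 0) - π j ω) * C j ω) :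
    ∀ j, 1 ≤ j → j ≤ K →
      μ[Vt (j + 1) | 𝓖 j] =ᵐ[μ] fun ω => (μ[ν j | 𝓖 j]) ω + π j ω * C j ω := by
  -- boundedness ⇒ integrability
  have hbdd_int : ∀ (f : Ω → ℝ) (M : ℝ), AEStronglyMeasurable f μ → (∀ ω, |f ω| ≤ M) →
      Integrable f μ := by
    intro f M hm hb
    exact Integrable.mono' (integrable_const M) hm
      (Filter.Eventually.of_forall fun ω => by simpa [Real.norm_eq_abs] using hb ω)
  -- the indicator part
  have hind_meas : ∀ j, 1 ≤ j → j ≤ K →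
      Measurable[𝓖 j] (fun ω => (if 0 < C j ω then (1 : ℝ) else 0)) := by
    intro j h1 h2
    exact Measurable.ite (measurableSet_lt measurable_const (hC j h1 h2))
      measurable_const measurable_const
  have hind_int : ∀ j, 1 ≤ j → j ≤ K →
      Integrable (fun ω => (if 0 < C j ω then (1 : ℝ) else 0) * C j ω) μ := by
    intro j h1 h2
    obtain ⟨M, hM⟩ := hCbdd j h1 h2
    refine hbdd_int _ M (((hind_meas j h1 h2).mul (hC j h1 h2)).mono
      (h𝓖le j h1 h2) le_rfl).aestronglyMeasurable ?_
    intro ω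
    rw [abs_mul]
    calc |if 0 < C j ω then (1:ℝ) else 0| * |C j ω| ≤ 1 * |C j ω| := by
          refine mul_le_mul_of_nonneg_right ?_ (abs_nonneg _)
          split <;> simp
      _ = |C j ω| := one_mul _
      _ ≤ M := hM ω
  have hg_int : ∀ j, 1 ≤ j → j ≤ K →
      Integrable (fun ω => ((if 0 < C j ω then (1 : ℝ) else 0) - π j ω) * C j ω) μ := by
    intro j h1 h2
    obtain ⟨M, hM⟩ := hCbdd j h1 h2
    obtain ⟨Mp, hMp⟩ := hπbdd j h1 h2
    refine hbdd_int _ ((1 + Mp) * M) ((((hind_meas j h1 h2).sub (hπ j h1 h2)).mul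
      (hC j h1 h2)).mono (h𝓖le j h1 h2) le_rfl).aestronglyMeasurable ?_
    intro ω
    rw [abs_mul]
    have h1' : |(if 0 < C j ω then (1:ℝ) else 0) - π j ω| ≤ 1 + Mp := by
      refine (abs_sub _ _).trans ?_
      have : |if 0 < C j ω then (1:ℝ) else 0| ≤ 1 := by split <;> simp
      linarith [hMp ω]
    have hMnn : (0:ℝ) ≤ M := (abs_nonneg _).trans (hM ω)
    have h2' : (0:ℝ) ≤ 1 + Mp := le_trans (by linarith [abs_nonneg ((if 0 < C j ω then (1:ℝ) else 0) - π j ω)]) h1'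
    exact mul_le_mul h1' (hM ω) (abs_nonneg _) h2'
  -- integrability of the pseudo outcomes
  have hVtint : ∀ d j, j + d = K + 1 → 1 ≤ j → Integrable (Vt j) μ := by
    intro d
    induction d with
    | zero =>
      intro j h _
      have hj : j = K + 1 := by omega
      rw [hj, hVttop]; exact hY
    | succ n ih =>
      intro j h hj
      have hjK : j ≤ K := by omega
      rw [hVt j hj hjK]
      exact (ih (j + 1) (by omega) (by omega)).add (hg_int j hj hjK)
  -- the key stage identity for the unmodified value functions
  have stage : ∀ j, 1 ≤ j → j ≤ K →
      μ[V (j + 1) | 𝓖 j] =ᵐ[μ] fun ω => (μ[ν j | 𝓖 j]) ω + π j ω * C j ω := by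
    intro j h1 h2
    obtain ⟨MC, hMC⟩ := hCbdd j h1 h2
    obtain ⟨𝓜, hG𝓜, h𝓜m, hrec⟩ := h𝓜 j h1 h2
    have hCm : Measurable[mΩ] (C j) := (hC j h1 h2).mono (h𝓖le j h1 h2) le_rfl
    have hA' : Measurable[mΩ] (A j) := hA j h1 h2
    have hAabs : ∀ ω, |A j ω| ≤ 1 := by
      intro ω; rcases hA01 j h1 h2 ω with h | h <;> simp [h]
    have hAint : Integrable (A j) μ :=
      hbdd_int _ 1 hA'.aestronglyMeasurable hAabs
    have _unused := hAint
    have hCA_int : Integrable (C j * A j) μ := by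
      refine hbdd_int _ MC (hCm.mul hA').aestronglyMeasurable ?_
      intro ω
      simp only [Pi.mul_apply, abs_mul]
      calc |C j ω| * |A j ω| ≤ MC * 1 :=
            mul_le_mul (hMC ω) (hAabs ω) (abs_nonneg _) ((abs_nonneg _).trans (hMC ω))
        _ = MC := mul_one _
    have hmul : μ[C j * A j | 𝓖 j] =ᵐ[μ] C j * μ[A j | 𝓖 j] :=
      condExp_mul_of_stronglyMeasurable_left (hC j h1 h2).stronglyMeasurable hCA_int hAint
    calc μ[V (j + 1) | 𝓖 j]
        =ᵐ[μ] μ[μ[V (j + 1) | 𝓜] | 𝓖 j] := (condExp_condExp_of_le hG𝓜 h𝓜m).symm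
      _ =ᵐ[μ] μ[(fun ω => ν j ω + (C j * A j) ω) | 𝓖 j] := by
          refine condExp_congr_ae (hrec.trans (Filter.Eventually.of_forall fun ω => ?_))
          simp [mul_comm]
      _ =ᵐ[μ] μ[ν j | 𝓖 j] + μ[C j * A j | 𝓖 j] := condExp_add (hν j h1 h2) hCA_int _
      _ =ᵐ[μ] fun ω => (μ[ν j | 𝓖 j]) ω + π j ω * C j ω := by
          filter_upwards [hmul, hπver j h1 h2] with ω h1' h2'
          simp only [Pi.add_apply, Pi.mul_apply] at h1' ⊢
          rw [h1', ← h2', mul_comm]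
  -- main downward induction
  have main : ∀ d j, 1 ≤ j → j + d = K →
      μ[Vt (j + 1) | 𝓖 j] =ᵐ[μ] fun ω => (μ[ν j | 𝓖 j]) ω + π j ω * C j ω := by
    intro d
    induction d with
    | zero =>
      intro j h1 h2
      have hj : j = K := by omega
      have : Vt (j + 1) = V (j + 1) := by rw [hj, hVttop, hVtop]
      rw [this]
      exact stage j h1 (by omega)
    | succ n ih =>
      intro j h1 h2
      have hjK : j < K := by omega
      set i := j + 1 with hi
      have hi1 : 1 ≤ i := by omega
      have hi2 : i ≤ K := by omega
      have hGi : 𝓖 i ≤ mΩ := h𝓖le i hi1 hi2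
      have hVti1 : Integrable (Vt (i + 1)) μ := hVtint (K - i) (i + 1) (by omega) (by omega)
      have hgi : Integrable (fun ω => ((if 0 < C i ω then (1 : ℝ) else 0) - π i ω) * C i ω) μ :=
        hg_int i hi1 hi2
      have hg_sm : StronglyMeasurable[𝓖 i]
          (fun ω => ((if 0 < C i ω then (1 : ℝ) else 0) - π i ω) * C i ω) :=
        (((hind_meas i hi1 hi2).sub (hπ i hi1 hi2)).mul (hC i hi1 hi2)).stronglyMeasurable
      have hind_sm : StronglyMeasurable[𝓖 i]
          (fun ω => (if 0 < C i ω then (1 : ℝ) else 0) * C i ω) :=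
        ((hind_meas i hi1 hi2).mul (hC i hi1 hi2)).stronglyMeasurable
      -- E[Vt i | 𝓖 i] = E[ν i | 𝓖 i] + 1{C_i>0} C_i
      have hVtGi : μ[Vt i | 𝓖 i] =ᵐ[μ]
          fun ω => (μ[ν i | 𝓖 i]) ω + (if 0 < C i ω then (1 : ℝ) else 0) * C i ω := by
        calc μ[Vt i | 𝓖 i]
            =ᵐ[μ] μ[(fun ω => Vt (i + 1) ω +
              ((if 0 < C i ω then (1 : ℝ) else 0) - π i ω) * C i ω) | 𝓖 i] := by
              rw [← hVt i hi1 hi2]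
          _ =ᵐ[μ] μ[Vt (i + 1) | 𝓖 i] +
              μ[(fun ω => ((if 0 < C i ω then (1 : ℝ) else 0) - π i ω) * C i ω) | 𝓖 i] :=
              condExp_add hVti1 hgi _
          _ =ᵐ[μ] fun ω => (μ[ν i | 𝓖 i]) ω + (if 0 < C i ω then (1 : ℝ) else 0) * C i ω := by
              have hgid := condExp_of_stronglyMeasurable hGi hg_sm hgi
              filter_upwards [ih i hi1 (by omega)] with ω hω
              simp only [Pi.add_apply, hgid, hω]
              ring
      -- E[V i | 𝓖 i] is the same
      have hVGi : μ[V i | 𝓖 i] =ᵐ[μ]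
          fun ω => (μ[ν i | 𝓖 i]) ω + (if 0 < C i ω then (1 : ℝ) else 0) * C i ω := by
        calc μ[V i | 𝓖 i]
            =ᵐ[μ] μ[(fun ω => ν i ω +
              (if 0 < C i ω then (1 : ℝ) else 0) * C i ω) | 𝓖 i] := by rw [← hV i hi1 hi2]
          _ =ᵐ[μ] μ[ν i | 𝓖 i] +
              μ[(fun ω => (if 0 < C i ω then (1 : ℝ) else 0) * C i ω) | 𝓖 i] :=
              condExp_add (hν i hi1 hi2) (hind_int i hi1 hi2) _
          _ =ᵐ[μ] fun ω => (μ[ν i | 𝓖 i]) ω + (if 0 < C i ω then (1 : ℝ) else 0) * C i ω := by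
              rw [condExp_of_stronglyMeasurable hGi hind_sm (hind_int i hi1 hi2)]
              exact Filter.Eventually.of_forall fun ω => rfl
      have hle : 𝓖 j ≤ 𝓖 i := h𝓖mono j h1 hjK
      calc μ[Vt i | 𝓖 j]
          =ᵐ[μ] μ[μ[Vt i | 𝓖 i] | 𝓖 j] := (condExp_condExp_of_le hle hGi).symm
        _ =ᵐ[μ] μ[μ[V i | 𝓖 i] | 𝓖 j] := condExp_congr_ae (hVtGi.trans hVGi.symm)
        _ =ᵐ[μ] μ[V i | 𝓖 j] := condExp_condExp_of_le hle hGi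
        _ =ᵐ[μ] fun ω => (μ[ν j | 𝓖 j]) ω + π j ω * C j ω := stage j h1 (by omega)
  intro j h1 h2
  exact main (K - j) j h1 (by omega)
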